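/- Let X be a Banach sequence space. Then every closed sublattice of X is the closed linear span of a (finite or infinite) disjoint sequence of positive vectors, and conversely every such closed span is a closed sublattice. -/

import Mathlib

open Filter Finset

section BSSAux

variable {X : Type*} [NormedAddCommGroup X] [Lattice X] [HasSolidNorm X]
    [IsOrderedAddMonoid X] [NormedSpace ℝ X]

private lemma bss_coordS (c : ℕ → (X →L[ℝ] ℝ)) (e : ℕ → X)
    (huniq : ∀ i j, c i (e j) = if i = j then 1 else 0) (x : X) (N j : ℕ) :
    c j (∑ i ∈ Finset.range N, c i x • e i) = if j < N then c j x else 0 := by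
  classical
  rw [map_sum]
  have h1 : ∀ i ∈ Finset.range N, c j (c i x • e i) = if j = i then c i x else 0 := by
    intro i _
    rw [map_smul, huniq j i]
    simp [smul_eq_mul, mul_ite]
  rw [Finset.sum_congr rfl h1, Finset.sum_ite_eq (Finset.range N) j (fun i => c i x)]
  simp [Finset.mem_range]

private lemma bss_ext (c : ℕ → (X →L[ℝ] ℝ)) (e : ℕ → X)
    (hbasis : ∀ x : X, Filter.Tendsto
      (fun n => ∑ i ∈ Finset.range n, c i x • e i) Filter.atTop (nhds x))
    {x y : X} (h : ∀ i, c i x = c i y) : x = y := by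
  have h1 := hbasis x
  have h2 := hbasis y
  simp only [h] at h1
  exact tendsto_nhds_unique h1 h2

private lemma bss_le_iff (c : ℕ → (X →L[ℝ] ℝ))
    (horder : ∀ x : X, 0 ≤ x ↔ ∀ i, 0 ≤ c i x) (x y : X) :
    x ≤ y ↔ ∀ i, c i x ≤ c i y := by
  rw [← sub_nonneg, horder]
  simp [sub_nonneg]

private lemma bss_coord_inf (c : ℕ → (X →L[ℝ] ℝ)) (e : ℕ → X)
    (hbasis : ∀ x : X, Filter.Tendsto
      (fun n => ∑ i ∈ Finset.range n, c i x • e i) Filter.atTop (nhds x))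
    (huniq : ∀ i j, c i (e j) = if i = j then 1 else 0)
    (horder : ∀ x : X, 0 ≤ x ↔ ∀ i, 0 ≤ c i x) (x y : X) (i : ℕ) :
    c i (x ⊓ y) = min (c i x) (c i y) := by
  have hab : (x - x ⊓ y) ⊓ (y - x ⊓ y) = 0 := by
    rw [← inf_sub, sub_self]
  have ha0 : (0 : X) ≤ x - x ⊓ y := sub_nonneg.2 inf_le_left
  have hb0 : (0 : X) ≤ y - x ⊓ y := sub_nonneg.2 inf_le_right
  have ht0 : 0 ≤ min (c i (x - x ⊓ y)) (c i (y - x ⊓ y)) :=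
    le_min ((horder _).1 ha0 i) ((horder _).1 hb0 i)
  have hcoords : ∀ z : X, (0:X) ≤ z → min (c i (x - x ⊓ y)) (c i (y - x ⊓ y)) ≤ c i z →
      min (c i (x - x ⊓ y)) (c i (y - x ⊓ y)) • e i ≤ z := by
    intro z hz hiz
    rw [bss_le_iff c horder]
    intro j
    rw [map_smul, smul_eq_mul, huniq j i]
    by_cases hji : j = i
    · subst hji; simpa using hiz
    · simp only [hji, if_neg, mul_zero, if_false]
      exact (horder z).1 hz j
  have hle : min (c i (x - x ⊓ y)) (c i (y - x ⊓ y)) • e i ≤ (0:X) := by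
    rw [← hab]
    exact le_inf (hcoords _ ha0 (min_le_left _ _)) (hcoords _ hb0 (min_le_right _ _))
  have ht : min (c i (x - x ⊓ y)) (c i (y - x ⊓ y)) ≤ 0 := by
    have h1 : c i (min (c i (x - x ⊓ y)) (c i (y - x ⊓ y)) • e i) ≤ c i 0 := by
      rw [← sub_nonneg, ← map_sub]
      exact (horder _).1 (by simpa using hle) i
    rw [map_smul, smul_eq_mul, huniq i i, map_zero] at h1
    simpa using h1
  have ht' : min (c i (x - x ⊓ y)) (c i (y - x ⊓ y)) = 0 := le_antisymm ht ht0
  rw [map_sub, map_sub] at ht'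
  rcases le_total (c i x) (c i y) with h | h
  · rw [min_eq_left h]
    rw [min_eq_left (by linarith : c i x - c i (x ⊓ y) ≤ c i y - c i (x ⊓ y))] at ht'
    linarith
  · rw [min_eq_right h]
    rw [min_eq_right (by linarith : c i y - c i (x ⊓ y) ≤ c i x - c i (x ⊓ y))] at ht'
    linarith

private lemma bss_coord_sup (c : ℕ → (X →L[ℝ] ℝ)) (e : ℕ → X)
    (hbasis : ∀ x : X, Filter.Tendsto
      (fun n => ∑ i ∈ Finset.range n, c i x • e i) Filter.atTop (nhds x))
    (huniq : ∀ i j, c i (e j) = if i = j then 1 else 0)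
    (horder : ∀ x : X, 0 ≤ x ↔ ∀ i, 0 ≤ c i x) (x y : X) (i : ℕ) :
    c i (x ⊔ y) = max (c i x) (c i y) := by
  have h := inf_add_sup x y
  have h1 : c i (x ⊓ y) + c i (x ⊔ y) = c i x + c i y := by
    rw [← map_add, h, map_add]
  rw [bss_coord_inf c e hbasis huniq horder] at h1
  have := min_add_max (c i x) (c i y)
  linarith

private lemma bss_coord_abs (c : ℕ → (X →L[ℝ] ℝ)) (e : ℕ → X)
    (hbasis : ∀ x : X, Filter.Tendsto
      (fun n => ∑ i ∈ Finset.range n, c i x • e i) Filter.atTop (nhds x))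
    (huniq : ∀ i j, c i (e j) = if i = j then 1 else 0)
    (horder : ∀ x : X, 0 ≤ x ↔ ∀ i, 0 ≤ c i x) (x : X) (i : ℕ) :
    c i |x| = |c i x| := by
  have habs : |x| = x ⊔ -x := rfl
  rw [habs, bss_coord_sup c e hbasis huniq horder, map_neg]
  rcases le_total (c i x) 0 with h | h
  · rw [abs_of_nonpos h, max_eq_right (by linarith)]
  · rw [abs_of_nonneg h, max_eq_left (by linarith)]

private lemma bss_norm_le (c : ℕ → (X →L[ℝ] ℝ)) (e : ℕ → X)
    (hbasis : ∀ x : X, Filter.Tendsto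
      (fun n => ∑ i ∈ Finset.range n, c i x • e i) Filter.atTop (nhds x))
    (huniq : ∀ i j, c i (e j) = if i = j then 1 else 0)
    (horder : ∀ x : X, 0 ≤ x ↔ ∀ i, 0 ≤ c i x) (x y : X)
    (h : ∀ i, |c i x| ≤ |c i y|) : ‖x‖ ≤ ‖y‖ := by
  refine HasSolidNorm.solid ?_
  rw [bss_le_iff c horder]
  intro i
  rw [bss_coord_abs c e hbasis huniq horder, bss_coord_abs c e hbasis huniq horder]
  exact h i

end BSSAux


section BSSFwd

variable {X : Type*} [NormedAddCommGroup X] [Lattice X] [HasSolidNorm X]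
    [IsOrderedAddMonoid X] [NormedSpace ℝ X]

private def bssAct (c : ℕ → (X →L[ℝ] ℝ)) (Y : Submodule ℝ X) (i : ℕ) : Prop :=
  ∃ y ∈ Y, c i y ≠ 0

private def bssRel (c : ℕ → (X →L[ℝ] ℝ)) (Y : Submodule ℝ X) (i j : ℕ) : Prop :=
  ∀ y ∈ Y, ∀ z ∈ Y, c i y * c j z = c i z * c j y

private def bssRep (c : ℕ → (X →L[ℝ] ℝ)) (Y : Submodule ℝ X) (n : ℕ) : Prop :=
  bssAct c Y n ∧ ∀ m, m < n → ¬ (bssAct c Y m ∧ bssRel c Y m n)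

private lemma bssRel.refl (c : ℕ → (X →L[ℝ] ℝ)) (Y : Submodule ℝ X) (i : ℕ) :
    bssRel c Y i i := fun y _ z _ => by ring

private lemma bssRel.symm {c : ℕ → (X →L[ℝ] ℝ)} {Y : Submodule ℝ X} {i j : ℕ}
    (h : bssRel c Y i j) : bssRel c Y j i := by
  intro y hy z hz
  have := h z hz y hy
  linarith

private lemma bssRel.trans {c : ℕ → (X →L[ℝ] ℝ)} {Y : Submodule ℝ X} {i j k : ℕ}
    (hj : bssAct c Y j) (hij : bssRel c Y i j) (hjk : bssRel c Y j k) :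
    bssRel c Y i k := by
  obtain ⟨u, hu, hu0⟩ := hj
  have fi : ∀ w ∈ Y, c i w = (c i u / c j u) * c j w := by
    intro w hw
    have h1 := hij w hw u hu
    field_simp
    linarith
  have fk : ∀ w ∈ Y, c k w = (c k u / c j u) * c j w := by
    intro w hw
    have h1 := hjk u hu w hw
    field_simp
    linarith
  intro y hy z hz
  rw [fi y hy, fi z hz, fk y hy, fk z hz]
  ring

private lemma bss_find_rep {c : ℕ → (X →L[ℝ] ℝ)} {Y : Submodule ℝ X} {l : ℕ}
    (hl : bssAct c Y l) : ∃ r, bssRep c Y r ∧ bssRel c Y r l ∧ r ≤ l := by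
  classical
  have hex : ∃ m, bssAct c Y m ∧ bssRel c Y m l := ⟨l, hl, bssRel.refl c Y l⟩
  obtain ⟨hra, hrl⟩ := Nat.find_spec hex
  refine ⟨Nat.find hex, ⟨hra, ?_⟩, hrl, Nat.find_le ⟨hl, bssRel.refl c Y l⟩⟩
  rintro m hm ⟨hma, hmr⟩
  exact Nat.find_min hex hm ⟨hma, bssRel.trans hra hmr hrl⟩

private lemma bss_rep_uniq {c : ℕ → (X →L[ℝ] ℝ)} {Y : Submodule ℝ X} {r r' l : ℕ}
    (hr : bssRep c Y r) (hr' : bssRep c Y r') (hl : bssAct c Y l)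
    (hrl : bssRel c Y r l) (hr'l : bssRel c Y r' l) : r = r' := by
  by_contra hne
  rcases lt_or_gt_of_ne hne with h | h
  · exact hr'.2 r h ⟨hr.1, bssRel.trans hl hrl hr'l.symm⟩
  · exact hr.2 r' h ⟨hr'.1, bssRel.trans hl hr'l hrl.symm⟩


private lemma bssK (c : ℕ → (X →L[ℝ] ℝ)) (e : ℕ → X)
    (hbasis : ∀ x : X, Filter.Tendsto
      (fun n => ∑ i ∈ Finset.range n, c i x • e i) Filter.atTop (nhds x))
    (huniq : ∀ i j, c i (e j) = if i = j then 1 else 0)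
    (horder : ∀ x : X, 0 ≤ x ↔ ∀ i, 0 ≤ c i x)
    {Y : Submodule ℝ X} (hYsup : ∀ x ∈ Y, ∀ y ∈ Y, x ⊔ y ∈ Y)
    {n j : ℕ} (hnj : ¬ bssRel c Y n j) :
    ∃ p, p ∈ Y ∧ (0:X) ≤ p ∧ c n p = 1 ∧ c j p = 0 := by
  unfold bssRel at hnj
  push_neg at hnj
  obtain ⟨y, hy, z, hz, hD⟩ := hnj
  have hD0 : c n y * c j z - c n z * c j y ≠ 0 := sub_ne_zero.2 hD
  set D := c n y * c j z - c n z * c j y with hDdef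
  set u := (c j z / D) • y - (c j y / D) • z with hudef
  have huY : u ∈ Y := Y.sub_mem (Y.smul_mem _ hy) (Y.smul_mem _ hz)
  have hun : c n u = 1 := by
    rw [hudef, map_sub, map_smul, map_smul, smul_eq_mul, smul_eq_mul]
    field_simp
    rw [hDdef]
    ring
  have huj : c j u = 0 := by
    rw [hudef, map_sub, map_smul, map_smul, smul_eq_mul, smul_eq_mul]
    field_simp
    ring
  refine ⟨u ⊔ 0, hYsup _ huY _ Y.zero_mem, le_sup_right, ?_, ?_⟩
  · rw [bss_coord_sup c e hbasis huniq horder, hun, map_zero]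
    norm_num
  · rw [bss_coord_sup c e hbasis huniq horder, huj, map_zero]
    norm_num

private lemma bssGEN (c : ℕ → (X →L[ℝ] ℝ)) (e : ℕ → X) [CompleteSpace X]
    (hbasis : ∀ x : X, Filter.Tendsto
      (fun n => ∑ i ∈ Finset.range n, c i x • e i) Filter.atTop (nhds x))
    (huniq : ∀ i j, c i (e j) = if i = j then 1 else 0)
    (horder : ∀ x : X, 0 ≤ x ↔ ∀ i, 0 ≤ c i x)
    {Y : Submodule ℝ X} (hYc : IsClosed (Y : Set X))
    (hYsup : ∀ x ∈ Y, ∀ y ∈ Y, x ⊔ y ∈ Y)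
    {n : ℕ} (hn : bssAct c Y n) :
    ∃ dn, dn ∈ Y ∧ (0:X) ≤ dn ∧ 0 < c n dn ∧ ∀ l, ¬ bssRel c Y n l → c l dn = 0 := by
  classical
  have coordInf := bss_coord_inf c e hbasis huniq horder
  have coordAbs := bss_coord_abs c e hbasis huniq horder
  have hsm : ∀ (t : ℝ), 0 ≤ t → ∀ z : X, (0:X) ≤ z → (0:X) ≤ t • z := by
    intro t ht z hz
    rw [horder]
    intro l
    rw [map_smul, smul_eq_mul]
    exact mul_nonneg ht ((horder z).1 hz l)
  have hYinf : ∀ x ∈ Y, ∀ y ∈ Y, x ⊓ y ∈ Y := by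
    intro x hx y hy
    have h : x ⊓ y = -(-x ⊔ -y) := by rw [neg_sup, neg_neg, neg_neg]
    rw [h]
    exact Y.neg_mem (hYsup _ (Y.neg_mem hx) _ (Y.neg_mem hy))
  obtain ⟨y₀, hy₀, hy₀0⟩ := hn
  have hwY : |y₀| ∈ Y := by
    have h : |y₀| = y₀ ⊔ -y₀ := rfl
    rw [h]
    exact hYsup _ hy₀ _ (Y.neg_mem hy₀)
  set w := |y₀| with hwdef
  have hw0 : (0:X) ≤ w := abs_nonneg y₀
  have hwn : 0 < c n w := by
    rw [hwdef, coordAbs]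
    exact abs_pos.2 hy₀0
  have hwco : ∀ l, 0 ≤ c l w := (horder w).1 hw0
  choose p hpY hp0 hpn hpj using fun j (h : ¬ bssRel c Y n j) =>
    bssK c e hbasis huniq horder hYsup h
  set q : ℕ → X := fun N => Nat.rec w
    (fun N qN => if h : ¬ bssRel c Y n N then qN ⊓ ((c n w) • p N h) else qN) N with hqdef
  have hq0 : q 0 = w := rfl
  have hqsucc : ∀ N, q (N+1) =
      if h : ¬ bssRel c Y n N then q N ⊓ ((c n w) • p N h) else q N := fun N => rfl
  have hInv : ∀ N, q N ∈ Y ∧ ((0:X) ≤ q N ∧ q N ≤ w) ∧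
      (∀ l, bssRel c Y n l → c l (q N) = c l w) ∧
      (∀ j, j < N → ¬ bssRel c Y n j → c j (q N) = 0) := by
    intro N
    induction N with
    | zero =>
      rw [hq0]
      exact ⟨hwY, ⟨hw0, le_refl w⟩, fun l _ => rfl, fun j hj _ => absurd hj (Nat.not_lt_zero j)⟩
    | succ N ih =>
      obtain ⟨ihY, ⟨ih0, ihw⟩, ihclass, ihbad⟩ := ih
      rw [hqsucc]
      by_cases h : ¬ bssRel c Y n N
      · rw [dif_pos h]
        refine ⟨hYinf _ ihY _ (Y.smul_mem _ (hpY N h)),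
          ⟨le_inf ih0 (hsm _ hwn.le _ (hp0 N h)), inf_le_left.trans ihw⟩, ?_, ?_⟩
        · intro l hl
          rw [coordInf, map_smul, smul_eq_mul, ihclass l hl]
          have h2 := hl w hwY (p N h) (hpY N h)
          rw [hpn N h, one_mul] at h2
          rw [h2, min_self]
        · intro j hj hbadj
          rcases Nat.lt_succ_iff_lt_or_eq.1 hj with hj' | hj''
          · rw [coordInf, map_smul, smul_eq_mul, ihbad j hj' hbadj]
            exact min_eq_left (mul_nonneg hwn.le ((horder _).1 (hp0 N h) j))
          · subst hj''
            rw [coordInf, map_smul, smul_eq_mul, hpj _ h, mul_zero]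
            exact min_eq_right ((horder _).1 ih0 j)
      · rw [dif_neg h]
        push_neg at h
        refine ⟨ihY, ⟨ih0, ihw⟩, ihclass, ?_⟩
        intro j hj hbadj
        rcases Nat.lt_succ_iff_lt_or_eq.1 hj with hj' | hj''
        · exact ihbad j hj' hbadj
        · subst hj''
          exact absurd h hbadj
  -- Cauchy estimate
  have hbound : ∀ N M₁ M₂, N ≤ M₁ → N ≤ M₂ →
      ‖q M₁ - q M₂‖ ≤ ‖w - ∑ i ∈ Finset.range N, c i w • e i‖ := by
    intro N M₁ M₂ h1 h2
    apply bss_norm_le c e hbasis huniq horder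
    intro l
    simp only [map_sub, bss_coordS c e huniq]
    by_cases hlN : l < N
    · have hv : c l (q M₁) = c l (q M₂) := by
        by_cases hcl : bssRel c Y n l
        · rw [(hInv M₁).2.2.1 l hcl, (hInv M₂).2.2.1 l hcl]
        · rw [(hInv M₁).2.2.2 l (lt_of_lt_of_le hlN h1) hcl,
              (hInv M₂).2.2.2 l (lt_of_lt_of_le hlN h2) hcl]
      rw [hv, sub_self, if_pos hlN]
      simp
    · rw [if_neg hlN]
      have hb1 := (horder _).1 (hInv M₁).2.1.1 l
      have hb2 := (horder _).1 (hInv M₂).2.1.1 l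
      have hu1 : c l (q M₁) ≤ c l w := (bss_le_iff c horder _ _).1 (hInv M₁).2.1.2 l
      have hu2 : c l (q M₂) ≤ c l w := (bss_le_iff c horder _ _).1 (hInv M₂).2.1.2 l
      rw [sub_zero, abs_sub_le_iff, abs_of_nonneg (hwco l)]
      constructor <;> linarith
  have htail : Filter.Tendsto (fun N => ‖w - ∑ i ∈ Finset.range N, c i w • e i‖)
      Filter.atTop (nhds 0) := by
    have h := (tendsto_const_nhds (x := w) (f := Filter.atTop (α := ℕ))).sub (hbasis w)
    rw [sub_self] at h
    simpa using h.norm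
  have hcauchy : CauchySeq q := by
    apply cauchySeq_of_le_tendsto_0 _ _ htail
    intro m₁ m₂ N h1 h2
    rw [dist_eq_norm]
    exact hbound N m₁ m₂ h1 h2
  obtain ⟨dn, hdn⟩ := cauchySeq_tendsto_of_complete hcauchy
  have hdnY : dn ∈ Y := hYc.mem_of_tendsto hdn
    (Filter.Eventually.of_forall fun N => (hInv N).1)
  have hcoordlim : ∀ l, Filter.Tendsto (fun N => c l (q N)) Filter.atTop (nhds (c l dn)) :=
    fun l => ((c l).continuous.tendsto dn).comp hdn
  have hdclass : ∀ l, bssRel c Y n l → c l dn = c l w := by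
    intro l hl
    refine tendsto_nhds_unique (hcoordlim l) ?_
    have : (fun N => c l (q N)) = fun _ => c l w := funext fun N => (hInv N).2.2.1 l hl
    rw [this]
    exact tendsto_const_nhds
  have hdbad : ∀ l, ¬ bssRel c Y n l → c l dn = 0 := by
    intro l hl
    refine tendsto_nhds_unique (hcoordlim l) ?_
    refine Filter.Tendsto.congr' ?_ (tendsto_const_nhds (x := (0:ℝ)))
    filter_upwards [Filter.eventually_ge_atTop (l+1)] with N hN
    exact ((hInv N).2.2.2 l hN hl).symm
  refine ⟨dn, hdnY, ?_, ?_, hdbad⟩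
  · rw [horder]
    intro l
    by_cases hl : bssRel c Y n l
    · rw [hdclass l hl]; exact hwco l
    · rw [hdbad l hl]
  · rw [hdclass n (bssRel.refl c Y n)]
    exact hwn

end BSSFwd

theorem stmt8 {X : Type*} [NormedAddCommGroup X] [Lattice X] [HasSolidNorm X]
    [IsOrderedAddMonoid X] [NormedSpace ℝ X] [CompleteSpace X]
    (c : ℕ → (X →L[ℝ] ℝ)) (e : ℕ → X)
    (hbasis : ∀ x : X, Filter.Tendsto
      (fun n => ∑ i ∈ Finset.range n, c i x • e i) Filter.atTop (nhds x))
    (huniq : ∀ i j, c i (e j) = if i = j then 1 else 0)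
    (horder : ∀ x : X, 0 ≤ x ↔ ∀ i, 0 ≤ c i x)
    (Y : Submodule ℝ X) :
    (IsClosed (Y : Set X) ∧ ∀ x ∈ Y, ∀ y ∈ Y, x ⊔ y ∈ Y) ↔
      ∃ d : ℕ → X, (∀ n, 0 ≤ d n) ∧ (Pairwise fun i j => d i ⊓ d j = 0) ∧
        (Y : Set X) = closure (Submodule.span ℝ (Set.range d) : Set X) := by
  classical
  have coordInf := bss_coord_inf c e hbasis huniq horder
  have coordSup := bss_coord_sup c e hbasis huniq horder
  have coordAbs := bss_coord_abs c e hbasis huniq horder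
  have extX : ∀ {x y : X}, (∀ i, c i x = c i y) → x = y := fun h => bss_ext c e hbasis h
  have coordT : ∀ (x : X) (N j : ℕ),
      c j (x - ∑ i ∈ Finset.range N, c i x • e i) = if j < N then 0 else c j x := by
    intro x N j
    rw [map_sub, bss_coordS c e huniq]
    by_cases h : j < N <;> simp [h]
  have tailT : ∀ x : X,
      Filter.Tendsto (fun N => ‖x - ∑ i ∈ Finset.range N, c i x • e i‖)
        Filter.atTop (nhds 0) := by
    intro x
    have h := (tendsto_const_nhds (x := x) (f := Filter.atTop (α := ℕ))).sub (hbasis x)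
    rw [sub_self] at h
    simpa using h.norm
  constructor
  · rintro ⟨hYc, hYsup⟩
    have hDex : ∀ n : ℕ, ∃ dn : X, (bssRep c Y n →
        dn ∈ Y ∧ (0:X) ≤ dn ∧ 0 < c n dn ∧ ∀ l, ¬ bssRel c Y n l → c l dn = 0) ∧
        (¬ bssRep c Y n → dn = 0) := by
      intro n
      by_cases h : bssRep c Y n
      · obtain ⟨dn, h1, h2, h3, h4⟩ := bssGEN c e hbasis huniq horder hYc hYsup h.1
        exact ⟨dn, fun _ => ⟨h1, h2, h3, h4⟩, fun h' => absurd h h'⟩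
      · exact ⟨0, fun h' => absurd h' h, fun _ => rfl⟩
    choose D hD1 hD2 using hDex
    have hDY : ∀ n, D n ∈ Y := by
      intro n
      by_cases h : bssRep c Y n
      · exact (hD1 n h).1
      · rw [hD2 n h]; exact Y.zero_mem
    have hD0 : ∀ n, (0:X) ≤ D n := by
      intro n
      by_cases h : bssRep c Y n
      · exact (hD1 n h).2.1
      · rw [hD2 n h]
    have hDbad : ∀ n l, ¬ bssRel c Y n l → c l (D n) = 0 := by
      intro n l hnl
      by_cases h : bssRep c Y n
      · exact (hD1 n h).2.2.2 l hnl
      · rw [hD2 n h, map_zero]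
    have hinact : ∀ l, ¬ bssAct c Y l → ∀ y ∈ Y, c l y = 0 := by
      intro l hl y hy
      by_contra h
      exact hl ⟨y, hy, h⟩
    refine ⟨D, hD0, ?_, ?_⟩
    · intro i j hij
      by_cases hi : bssRep c Y i
      · by_cases hj : bssRep c Y j
        · apply extX
          intro l
          rw [coordInf, map_zero]
          by_cases hal : bssAct c Y l
          · have hone : ¬ bssRel c Y i l ∨ ¬ bssRel c Y j l := by
              by_contra hcon
              push_neg at hcon
              exact hij (bss_rep_uniq hi hj hal hcon.1 hcon.2)
            rcases hone with h | h
            · rw [hDbad i l h]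
              exact min_eq_left ((horder _).1 (hD0 j) l)
            · rw [hDbad j l h]
              exact min_eq_right ((horder _).1 (hD0 i) l)
          · rw [hinact l hal _ (hDY i)]
            exact min_eq_left ((horder _).1 (hD0 j) l)
        · rw [hD2 j hj]
          exact inf_eq_right.mpr (hD0 i)
      · rw [hD2 i hi]
        exact inf_eq_left.mpr (hD0 j)
    · apply Set.Subset.antisymm
      · intro y hy
        have hyY : y ∈ Y := hy
        set s : ℕ → X := fun N => ∑ n ∈ Finset.range (N+1), (c n y / c n (D n)) • D n
          with hsdef
        have hsmem : ∀ N, s N ∈ (Submodule.span ℝ (Set.range D) : Set X) := fun N =>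
          Submodule.sum_mem _ fun n _ =>
            Submodule.smul_mem _ _ (Submodule.subset_span ⟨n, rfl⟩)
        have hcs : ∀ N l, c l (s N) =
            ∑ n ∈ Finset.range (N+1), (c n y / c n (D n)) * c l (D n) := by
          intro N l
          rw [hsdef, map_sum]
          exact Finset.sum_congr rfl fun n _ => by rw [map_smul, smul_eq_mul]
        have hkey : ∀ N l, |c l y - c l (s N)| ≤ |if l < N+1 then 0 else c l y| := by
          intro N l
          by_cases hal : bssAct c Y l
          · obtain ⟨r, hrRep, hrl, hrle⟩ := bss_find_rep hal
            have hterm : ∀ m ∈ Finset.range (N+1), m ≠ r →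
                (c m y / c m (D m)) * c l (D m) = 0 := by
              intro m _ hmr
              by_cases hm : bssRep c Y m
              · have hnr : ¬ bssRel c Y m l := fun hrel =>
                  hmr (bss_rep_uniq hm hrRep hal hrel hrl)
                rw [hDbad m l hnr, mul_zero]
              · rw [hD2 m hm]
                simp
            by_cases hrN : r < N+1
            · have hsum : c l (s N) = (c r y / c r (D r)) * c l (D r) := by
                rw [hcs]
                exact Finset.sum_eq_single_of_mem r (Finset.mem_range.2 hrN) hterm
              have h2 := hrl y hyY (D r) (hDY r)
              have hpos : 0 < c r (D r) := (hD1 r hrRep).2.2.1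
              have hsl : c l (s N) = c l y := by
                rw [hsum]
                field_simp
                linarith
              rw [hsl, sub_self, abs_zero]
              exact abs_nonneg _
            · have hlN : ¬ l < N+1 := fun hc => hrN (lt_of_le_of_lt hrle hc)
              have hsum : c l (s N) = 0 := by
                rw [hcs]
                apply Finset.sum_eq_zero
                intro m hm
                exact hterm m hm (fun hmr => hrN (hmr ▸ Finset.mem_range.1 hm))
              rw [hsum, sub_zero, if_neg hlN]
          · have h1 : c l y = 0 := hinact l hal y hyY
            have hsum : c l (s N) = 0 := by
              rw [hcs]
              apply Finset.sum_eq_zero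
              intro m _
              rw [hinact l hal _ (hDY m), mul_zero]
            rw [h1, hsum, sub_zero, abs_zero]
            exact abs_nonneg _
        have hnorm : ∀ N, ‖y - s N‖ ≤
            ‖|y| - ∑ i ∈ Finset.range (N+1), c i |y| • e i‖ := by
          intro N
          apply bss_norm_le c e hbasis huniq horder
          intro l
          simp only [map_sub, bss_coordS c e huniq]
          simp only [coordAbs]
          by_cases hlN : l < N+1
          · rw [if_pos hlN]
            have hk := hkey N l
            rw [if_pos hlN] at hk
            simpa using hk
          · rw [if_neg hlN]
            have hk := hkey N l
            rw [if_neg hlN] at hk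
            rw [sub_zero, abs_abs]
            exact hk
        have htail' : Filter.Tendsto
            (fun N => ‖|y| - ∑ i ∈ Finset.range (N+1), c i |y| • e i‖)
            Filter.atTop (nhds 0) :=
          (tailT |y|).comp (Filter.tendsto_add_atTop_nat 1)
        have hzero : Filter.Tendsto (fun N => ‖s N - y‖) Filter.atTop (nhds 0) :=
          squeeze_zero (fun N => norm_nonneg _)
            (fun N => by rw [norm_sub_rev]; exact hnorm N) htail'
        have hconv : Filter.Tendsto s Filter.atTop (nhds y) := by
          rw [tendsto_iff_norm_sub_tendsto_zero]
          exact hzero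
        exact mem_closure_of_tendsto hconv (Filter.Eventually.of_forall hsmem)
      · exact closure_minimal
          (Submodule.span_le.2 (by rintro _ ⟨n, rfl⟩; exact hDY n)) hYc
  · rintro ⟨d, hd0, hdis, hspan⟩
    have hdcoord : ∀ (l : ℕ) {i j : ℕ}, i ≠ j → c l (d i) = 0 ∨ c l (d j) = 0 := by
      intro l i j hij
      have h0 : c l (d i ⊓ d j) = 0 := by rw [hdis hij, map_zero]
      rw [coordInf] at h0
      rcases le_total (c l (d i)) (c l (d j)) with h | h
      · left; rw [min_eq_left h] at h0; exact h0
      · right; rw [min_eq_right h] at h0; exact h0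
    have hsubl : ∀ u ∈ Submodule.span ℝ (Set.range d), ∀ v ∈ Submodule.span ℝ (Set.range d),
        u ⊔ v ∈ Submodule.span ℝ (Set.range d) := by
      intro u hu v hv
      rw [Finsupp.mem_span_range_iff_exists_finsupp] at hu hv
      obtain ⟨f, hf⟩ := hu
      obtain ⟨g, hg⟩ := hv
      have hfF : u = ∑ i ∈ f.support ∪ g.support, f i • d i := by
        rw [← hf, Finsupp.sum]
        refine Finset.sum_subset Finset.subset_union_left ?_
        intro i _ hi
        rw [Finsupp.notMem_support_iff.1 hi, zero_smul]
      have hgF : v = ∑ i ∈ f.support ∪ g.support, g i • d i := by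
        rw [← hg, Finsupp.sum]
        refine Finset.sum_subset Finset.subset_union_right ?_
        intro i _ hi
        rw [Finsupp.notMem_support_iff.1 hi, zero_smul]
      have hcsum : ∀ (h : ℕ → ℝ) (l : ℕ),
          c l (∑ i ∈ f.support ∪ g.support, h i • d i)
            = ∑ i ∈ f.support ∪ g.support, h i * c l (d i) := by
        intro h l
        rw [map_sum]
        exact Finset.sum_congr rfl fun i _ => by rw [map_smul, smul_eq_mul]
      have key : u ⊔ v = ∑ i ∈ f.support ∪ g.support, (max (f i) (g i)) • d i := by
        apply extX
        intro l
        rw [coordSup, hfF, hgF, hcsum, hcsum, hcsum]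
        by_cases hex : ∃ i₀ ∈ f.support ∪ g.support, c l (d i₀) ≠ 0
        · obtain ⟨i₀, hi₀F, hi₀⟩ := hex
          have hz : ∀ i ∈ f.support ∪ g.support, i ≠ i₀ → c l (d i) = 0 := by
            intro i _ hii
            rcases hdcoord l hii with h | h
            · exact h
            · exact absurd h hi₀
          rw [Finset.sum_eq_single_of_mem i₀ hi₀F
                (fun i hi hii => by rw [hz i hi hii, mul_zero]),
              Finset.sum_eq_single_of_mem i₀ hi₀F
                (fun i hi hii => by rw [hz i hi hii, mul_zero]),
              Finset.sum_eq_single_of_mem i₀ hi₀F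
                (fun i hi hii => by rw [hz i hi hii, mul_zero])]
          exact (max_mul_of_nonneg _ _ ((horder (d i₀)).1 (hd0 i₀) l)).symm
        · push_neg at hex
          rw [Finset.sum_eq_zero (fun i hi => by rw [hex i hi, mul_zero]),
              Finset.sum_eq_zero (fun i hi => by rw [hex i hi, mul_zero]),
              Finset.sum_eq_zero (fun i hi => by rw [hex i hi, mul_zero]), max_self]
      rw [key]
      exact Submodule.sum_mem _ fun i _ =>
        Submodule.smul_mem _ _ (Submodule.subset_span ⟨i, rfl⟩)
    refine ⟨by rw [hspan]; exact isClosed_closure, ?_⟩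
    intro x hx y hy
    have hx' : x ∈ closure (Submodule.span ℝ (Set.range d) : Set X) := by
      rw [← hspan]; exact hx
    have hy' : y ∈ closure (Submodule.span ℝ (Set.range d) : Set X) := by
      rw [← hspan]; exact hy
    rw [mem_closure_iff_seq_limit] at hx' hy'
    obtain ⟨ux, hux, huxt⟩ := hx'
    obtain ⟨uy, huy, huyt⟩ := hy'
    have htend : Filter.Tendsto (fun n => ux n ⊔ uy n) Filter.atTop (nhds (x ⊔ y)) :=
      huxt.sup_nhds' huyt
    have hmem : x ⊔ y ∈ closure (Submodule.span ℝ (Set.range d) : Set X) :=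
      mem_closure_of_tendsto htend
        (Filter.Eventually.of_forall fun n => hsubl _ (hux n) _ (huy n))
    rw [← SetLike.mem_coe, hspan]
    exact hmem
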